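/- Let μ ∈ Δ⁺_l be a long positive root and let w ∈ W satisfy w(θ) = μ and have minimal length among all elements of W taking θ to μ. If β ∈ Π and (β, μ) = 0, then w⁻¹(β) ∈ Π and (w⁻¹(β), θ) = 0. -/

import Mathlib

open scoped InnerProductSpace

/-- An irreducible reduced crystallographic root system, spanning a finite-dimensional
real inner product space, together with a fixed base (set of simple roots) and the
coefficient function expressing each root in the base. -/
structure RootSystemData (V : Type) [NormedAddCommGroup V] [InnerProductSpace ℝ V]
    [FiniteDimensional ℝ V] where
  roots : Set V
  finite : roots.Finite
  nonzero : ∀ γ ∈ roots, γ ≠ 0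
  spans : Submodule.span ℝ roots = ⊤
  reflClosed : ∀ α ∈ roots, ∀ β ∈ roots, β - (2 * ⟪β, α⟫_ℝ / ⟪α, α⟫_ℝ) • α ∈ roots
  crystal : ∀ α ∈ roots, ∀ β ∈ roots, ∃ k : ℤ, 2 * ⟪β, α⟫_ℝ / ⟪α, α⟫_ℝ = (k : ℝ)
  reduced : ∀ α ∈ roots, ∀ t : ℝ, t • α ∈ roots → t = 1 ∨ t = -1
  irred : ∀ A B : Set V, roots = A ∪ B → (∀ a ∈ A, ∀ b ∈ B, ⟪a, b⟫_ℝ = 0) →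
    A = ∅ ∨ B = ∅
  simples : Finset V
  simples_sub : ↑simples ⊆ roots
  simples_indep : LinearIndependent ℝ (Subtype.val : {x : V // x ∈ simples} → V)
  coeff : V → V → ℤ
  coeff_spec : ∀ γ ∈ roots, γ = ∑ α ∈ simples, coeff γ α • α
  coeff_sign : ∀ γ ∈ roots, (∀ α ∈ simples, 0 ≤ coeff γ α) ∨ (∀ α ∈ simples, coeff γ α ≤ 0)

namespace RootSystemData

variable {V : Type} [NormedAddCommGroup V] [InnerProductSpace ℝ V] [FiniteDimensional ℝ V]
variable (R : RootSystemData V)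

/-- The set of positive roots `Δ⁺` (w.r.t. the base `simples`). -/
def posRoots : Set V := {γ | γ ∈ R.roots ∧ ∀ α ∈ R.simples, 0 ≤ R.coeff γ α}

/-- The partial order `μ ≼ ν`: `ν - μ` is a nonnegative integral combination of simple roots. -/
def rle (μ ν : V) : Prop := ∃ c : V → ℕ, ν - μ = ∑ α ∈ R.simples, (c α : ℤ) • α

/-- `θ` is the highest root. -/
def IsHighest (θ : V) : Prop := θ ∈ R.posRoots ∧ ∀ γ ∈ R.roots, R.rle γ θ

/-- `γ` is a long root: a root of maximal length. -/
def IsLong (γ : V) : Prop := γ ∈ R.roots ∧ ∀ γ' ∈ R.roots, ‖γ'‖ ≤ ‖γ‖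

/-- `I` is an upper ideal of `(Δ⁺, ≼)`. -/
def IsUpperIdeal (I : Set V) : Prop :=
  I ⊆ R.posRoots ∧ ∀ ν ∈ I, ∀ γ ∈ R.posRoots, R.rle ν γ → γ ∈ I

/-- `I` is an abelian upper ideal of `(Δ⁺, ≼)`. -/
def IsAbelianIdeal (I : Set V) : Prop :=
  R.IsUpperIdeal I ∧ ∀ γ₁ ∈ I, ∀ γ₂ ∈ I, γ₁ + γ₂ ∉ R.roots

/-- The set of minimal elements of `M ⊆ Δ⁺` w.r.t. `≼`. -/
def minSet (M : Set V) : Set V := {γ | γ ∈ M ∧ ∀ ν ∈ M, R.rle ν γ → ν = γ}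

/-- The set of maximal elements of `M ⊆ Δ⁺` w.r.t. `≼`. -/
def maxSet (M : Set V) : Set V := {γ | γ ∈ M ∧ ∀ ν ∈ M, R.rle γ ν → ν = γ}

/-- `S(I) = {α ∈ Π : ∃ γ ∈ min(I), γ - α ∈ Δ⁺ ∪ {0}}`; the complement `Π ∖ S(I)` is the
set of simple roots of the standard Levi subalgebra of the normaliser of the ideal `I`. -/
def normS (I : Set V) : Set V :=
  {α | α ∈ R.simples ∧ ∃ γ ∈ R.minSet I, (γ - α ∈ R.posRoots ∨ γ = α)}

/-- `H = {γ ∈ Δ⁺ : (γ, θ) ≠ 0}`. -/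
def Hset (θ : V) : Set V := {γ | γ ∈ R.posRoots ∧ ⟪γ, θ⟫_ℝ ≠ 0}

/-- `deg_S(γ) = Σ_{α ∈ S} [γ:α]`. -/
def degS (S : Finset V) (γ : V) : ℤ := ∑ α ∈ S, R.coeff γ α

/-- `I_S = {γ ∈ Δ⁺ : deg_S(γ) ≥ ⌊d(S)/2⌋ + 1}`, where `d(S) = deg_S(θ)`: the abelian ideal
`g(≥ ⌊hot(p)/2⌋ + 1)` associated with the standard parabolic subalgebra `p(S)`. -/
def idealS (S : Finset V) (θ : V) : Set V :=
  {γ | γ ∈ R.posRoots ∧ R.degS S θ / 2 + 1 ≤ R.degS S γ}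

/-- The highest root `θ` is fundamental with `α_θ` the unique simple root not
orthogonal to `θ`, and `(θ, α_θ∨) = 1`. -/
def IsFundamental (θ αθ : V) : Prop :=
  αθ ∈ R.simples ∧ ⟪θ, αθ⟫_ℝ ≠ 0 ∧ (∀ β ∈ R.simples, ⟪θ, β⟫_ℝ ≠ 0 → β = αθ) ∧
    2 * ⟪θ, αθ⟫_ℝ / ⟪αθ, αθ⟫_ℝ = 1

end RootSystemData

/-- The reflection `s_α`. -/
noncomputable def rsRefl {V : Type} [NormedAddCommGroup V] [InnerProductSpace ℝ V] (α x : V) : V :=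
  x - (2 * ⟪x, α⟫_ℝ / ⟪α, α⟫_ℝ) • α

/-- The element of the Weyl group given by the word `l = [α₁, …, α_m]`,
namely `s_{α₁} ∘ ⋯ ∘ s_{α_m}`; its inverse is `wordMap l.reverse`. -/
noncomputable def wordMap {V : Type} [NormedAddCommGroup V] [InnerProductSpace ℝ V] (l : List V) : V → V :=
  l.foldr (fun α f => rsRefl α ∘ f) id
section Refl

variable {V : Type} [NormedAddCommGroup V] [InnerProductSpace ℝ V]

lemma rsRefl_apply (α x : V) : rsRefl α x = x - (2 * ⟪x, α⟫_ℝ / ⟪α, α⟫_ℝ) • α := rfl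

lemma rsRefl_inner (α x y : V) : ⟪rsRefl α x, rsRefl α y⟫_ℝ = ⟪x, y⟫_ℝ := by
  by_cases hα : α = 0
  · simp [hα, rsRefl]
  have hq : ⟪α, α⟫_ℝ ≠ 0 := fun h => hα (inner_self_eq_zero.mp h)
  simp only [rsRefl, inner_sub_left, inner_sub_right, real_inner_smul_left,
    real_inner_smul_right]
  rw [real_inner_comm α x, real_inner_comm α y]
  field_simp
  ring

lemma rsRefl_add (α x y : V) : rsRefl α (x + y) = rsRefl α x + rsRefl α y := by
  simp only [rsRefl, inner_add_left]
  have h : 2 * (⟪x, α⟫_ℝ + ⟪y, α⟫_ℝ) / ⟪α, α⟫_ℝ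
      = 2 * ⟪x, α⟫_ℝ / ⟪α, α⟫_ℝ + 2 * ⟪y, α⟫_ℝ / ⟪α, α⟫_ℝ := by ring
  rw [h, add_smul]
  abel

lemma rsRefl_smul (α : V) (c : ℝ) (x : V) : rsRefl α (c • x) = c • rsRefl α x := by
  simp only [rsRefl, real_inner_smul_left, smul_sub, smul_smul]
  have h : 2 * (c * ⟪x, α⟫_ℝ) / ⟪α, α⟫_ℝ = c * (2 * ⟪x, α⟫_ℝ / ⟪α, α⟫_ℝ) := by ring
  rw [h]

lemma rsRefl_neg (α x : V) : rsRefl α (-x) = -rsRefl α x := by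
  have := rsRefl_smul α (-1) x
  simpa using this

lemma rsRefl_sub (α x y : V) : rsRefl α (x - y) = rsRefl α x - rsRefl α y := by
  rw [sub_eq_add_neg, rsRefl_add, rsRefl_neg, ← sub_eq_add_neg]

lemma rsRefl_invol (α x : V) : rsRefl α (rsRefl α x) = x := by
  by_cases hα : α = 0
  · simp [hα, rsRefl]
  have hq : ⟪α, α⟫_ℝ ≠ 0 := fun h => hα (inner_self_eq_zero.mp h)
  have h1 : ⟪rsRefl α x, α⟫_ℝ = -⟪x, α⟫_ℝ := by
    simp only [rsRefl, inner_sub_left, real_inner_smul_left]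
    field_simp
    ring
  rw [rsRefl_apply α (rsRefl α x), h1, rsRefl_apply]
  have h2 : 2 * -⟪x, α⟫_ℝ / ⟪α, α⟫_ℝ = -(2 * ⟪x, α⟫_ℝ / ⟪α, α⟫_ℝ) := by ring
  rw [h2, neg_smul]
  abel

lemma rsRefl_of_inner_zero (α x : V) (h : ⟪x, α⟫_ℝ = 0) : rsRefl α x = x := by
  simp [rsRefl, h]

lemma rsRefl_self (α : V) (hα : α ≠ 0) : rsRefl α α = -α := by
  have hq : ⟪α, α⟫_ℝ ≠ 0 := fun h => hα (inner_self_eq_zero.mp h)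
  rw [rsRefl_apply]
  have h : 2 * ⟪α, α⟫_ℝ / ⟪α, α⟫_ℝ = 2 := by field_simp
  rw [h, two_smul]
  abel

lemma rsRefl_neg_base (α : V) : rsRefl (-α) = rsRefl α := by
  funext x
  simp only [rsRefl, inner_neg_right, inner_neg_left, neg_neg, smul_neg]
  have h : 2 * -⟪x, α⟫_ℝ / ⟪α, α⟫_ℝ = -(2 * ⟪x, α⟫_ℝ / ⟪α, α⟫_ℝ) := by ring
  rw [h, neg_smul, neg_neg]

lemma wordMap_nil : wordMap ([] : List V) = id := rfl

lemma wordMap_cons (α : V) (t : List V) : wordMap (α :: t) = rsRefl α ∘ wordMap t := rfl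

lemma wordMap_inner (l : List V) (x y : V) : ⟪wordMap l x, wordMap l y⟫_ℝ = ⟪x, y⟫_ℝ := by
  induction l with
  | nil => rfl
  | cons a t ih => exact (rsRefl_inner a (wordMap t x) (wordMap t y)).trans ih

lemma wordMap_add (l : List V) (x y : V) : wordMap l (x + y) = wordMap l x + wordMap l y := by
  induction l with
  | nil => rfl
  | cons a t ih =>
    show rsRefl a (wordMap t (x + y)) = rsRefl a (wordMap t x) + rsRefl a (wordMap t y)
    rw [ih, rsRefl_add]

lemma wordMap_smul (l : List V) (c : ℝ) (x : V) : wordMap l (c • x) = c • wordMap l x := by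
  induction l with
  | nil => rfl
  | cons a t ih =>
    show rsRefl a (wordMap t (c • x)) = c • rsRefl a (wordMap t x)
    rw [ih, rsRefl_smul]

lemma wordMap_neg (l : List V) (x : V) : wordMap l (-x) = -wordMap l x := by
  have := wordMap_smul l (-1) x
  simpa using this

lemma wordMap_sub (l : List V) (x y : V) : wordMap l (x - y) = wordMap l x - wordMap l y := by
  rw [sub_eq_add_neg, wordMap_add, wordMap_neg, ← sub_eq_add_neg]

lemma wordMap_append (l₁ l₂ : List V) : wordMap (l₁ ++ l₂) = wordMap l₁ ∘ wordMap l₂ := by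
  induction l₁ with
  | nil => rfl
  | cons a t ih =>
    show rsRefl a ∘ wordMap (t ++ l₂) = (rsRefl a ∘ wordMap t) ∘ wordMap l₂
    rw [ih]
    rfl

lemma wordMap_reverse_apply (l : List V) (x : V) : wordMap l.reverse (wordMap l x) = x := by
  induction l with
  | nil => rfl
  | cons a t ih =>
    show wordMap ((a :: t).reverse) (rsRefl a (wordMap t x)) = x
    rw [List.reverse_cons, wordMap_append]
    show wordMap t.reverse (wordMap [a] (rsRefl a (wordMap t x))) = x
    show wordMap t.reverse (rsRefl a (rsRefl a (wordMap t x))) = x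
    rw [rsRefl_invol]
    exact ih

lemma wordMap_apply_reverse (l : List V) (x : V) : wordMap l (wordMap l.reverse x) = x := by
  have h := wordMap_reverse_apply l.reverse x
  rwa [List.reverse_reverse] at h

lemma wordMap_conj (l : List V) (δ x : V) :
    wordMap l (rsRefl δ x) = rsRefl (wordMap l δ) (wordMap l x) := by
  rw [rsRefl_apply δ x, wordMap_sub, wordMap_smul, rsRefl_apply, wordMap_inner, wordMap_inner]

end Refl

lemma real_inner_self_pos' {V : Type} [NormedAddCommGroup V] [InnerProductSpace ℝ V]
    {x : V} (hx : x ≠ 0) : 0 < ⟪x, x⟫_ℝ := by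
  have h1 : 0 ≤ ⟪x, x⟫_ℝ := real_inner_self_nonneg
  rcases h1.lt_or_eq with h | h
  · exact h
  · exact absurd (inner_self_eq_zero.mp h.symm) hx
section RootFacts

variable {V : Type} [NormedAddCommGroup V] [InnerProductSpace ℝ V] [FiniteDimensional ℝ V]

lemma sum_zsmul_eq (s : Finset V) (f : V → ℤ) :
    (∑ α ∈ s, f α • α) = ∑ α ∈ s, ((f α : ℝ)) • α :=
  Finset.sum_congr rfl fun α _ => (Int.cast_smul_eq_zsmul ℝ _ _).symm

namespace RootSystemData

variable (R : RootSystemData V)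

open Classical

lemma sum_smul_eq_zero {f : V → ℝ} (h : ∑ α ∈ R.simples, f α • α = 0) :
    ∀ α ∈ R.simples, f α = 0 := by
  intro α hα
  have hi := linearIndependent_iff'.mp R.simples_indep
  have h2 : ∑ x ∈ R.simples.attach, f x.1 • (x.1 : V) = 0 := by
    rw [Finset.sum_attach R.simples (fun a => f a • a)]; exact h
  exact hi R.simples.attach (fun i => f i.1) h2 ⟨α, hα⟩ (Finset.mem_attach _ _)

lemma coords_unique {f g : V → ℝ}
    (h : ∑ α ∈ R.simples, f α • α = ∑ α ∈ R.simples, g α • α) :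
    ∀ α ∈ R.simples, f α = g α := by
  intro α hα
  have h0 : ∑ α ∈ R.simples, (f α - g α) • α = 0 := by
    simp only [sub_smul]
    rw [Finset.sum_sub_distrib, h, sub_self]
  have := R.sum_smul_eq_zero h0 α hα
  linarith

lemma coeff_spec' {γ : V} (hγ : γ ∈ R.roots) :
    γ = ∑ α ∈ R.simples, ((R.coeff γ α : ℝ)) • α :=
  (R.coeff_spec γ hγ).trans (sum_zsmul_eq _ _)

lemma coeff_val {γ : V} (hγ : γ ∈ R.roots) {f : V → ℝ}
    (h : γ = ∑ α ∈ R.simples, f α • α) : ∀ α ∈ R.simples, (R.coeff γ α : ℝ) = f α :=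
  R.coords_unique (by rw [← R.coeff_spec' hγ, ← h])

/-- A negative root: all coefficients nonpositive. -/
def IsNegRoot (γ : V) : Prop := γ ∈ R.roots ∧ ∀ α ∈ R.simples, R.coeff γ α ≤ 0

lemma pos_or_neg {γ : V} (hγ : γ ∈ R.roots) : γ ∈ R.posRoots ∨ R.IsNegRoot γ :=
  (R.coeff_sign γ hγ).imp (fun h => ⟨hγ, h⟩) (fun h => ⟨hγ, h⟩)

lemma not_pos_neg {γ : V} (hp : γ ∈ R.posRoots) (hn : R.IsNegRoot γ) : False := by
  have h0 : ∀ α ∈ R.simples, R.coeff γ α = 0 := fun α hα =>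
    le_antisymm (hn.2 α hα) (hp.2 α hα)
  refine R.nonzero γ hp.1 ?_
  rw [R.coeff_spec γ hp.1]
  exact Finset.sum_eq_zero fun α hα => by rw [h0 α hα, zero_smul]

lemma neg_mem {γ : V} (hγ : γ ∈ R.roots) : -γ ∈ R.roots := by
  have h := R.reflClosed γ hγ γ hγ
  have hq : ⟪γ, γ⟫_ℝ ≠ 0 := fun h0 => R.nonzero γ hγ (inner_self_eq_zero.mp h0)
  have h1 : 2 * ⟪γ, γ⟫_ℝ / ⟪γ, γ⟫_ℝ = 2 := by field_simp
  rw [h1] at h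
  have h2 : γ - (2 : ℝ) • γ = -γ := by rw [two_smul]; abel
  rwa [h2] at h

lemma coeff_neg {γ : V} (hγ : γ ∈ R.roots) :
    ∀ α ∈ R.simples, (R.coeff (-γ) α : ℝ) = -(R.coeff γ α : ℝ) := by
  refine R.coeff_val (R.neg_mem hγ) ?_
  nth_rewrite 1 [R.coeff_spec' hγ]
  rw [← Finset.sum_neg_distrib]
  exact Finset.sum_congr rfl fun α _ => (neg_smul _ _).symm

lemma neg_posRoot {γ : V} (h : γ ∈ R.posRoots) : R.IsNegRoot (-γ) := by
  refine ⟨R.neg_mem h.1, fun α hα => ?_⟩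
  have h1 := R.coeff_neg h.1 α hα
  have h2 := h.2 α hα
  have h3 : (R.coeff (-γ) α : ℝ) ≤ 0 := by
    rw [h1]
    simp only [neg_nonpos]
    exact_mod_cast h2
  exact_mod_cast h3

lemma neg_negRoot {γ : V} (h : R.IsNegRoot γ) : -γ ∈ R.posRoots := by
  refine ⟨R.neg_mem h.1, fun α hα => ?_⟩
  have h1 := R.coeff_neg h.1 α hα
  have h2 := h.2 α hα
  have h3 : (0 : ℝ) ≤ (R.coeff (-γ) α : ℝ) := by
    rw [h1]
    simp only [Left.nonneg_neg_iff]
    exact_mod_cast h2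
  exact_mod_cast h3

lemma simple_indicator {β : V} (hβ : β ∈ R.simples) :
    β = ∑ α ∈ R.simples, (if α = β then (1 : ℝ) else 0) • α := by
  simp [ite_smul, Finset.sum_ite_eq', hβ]

lemma coeff_simple {β : V} (hβ : β ∈ R.simples) :
    ∀ α ∈ R.simples, (R.coeff β α : ℝ) = if α = β then 1 else 0 :=
  R.coeff_val (R.simples_sub hβ) (R.simple_indicator hβ)

lemma simple_pos {β : V} (hβ : β ∈ R.simples) : β ∈ R.posRoots := by
  refine ⟨R.simples_sub hβ, fun α hα => ?_⟩
  have h1 := R.coeff_simple hβ α hα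
  have h2 : (0 : ℝ) ≤ (R.coeff β α : ℝ) := by rw [h1]; split <;> norm_num
  exact_mod_cast h2

lemma pos_add_pos_ne_simple {x y β : V} (hx : x ∈ R.posRoots) (hy : y ∈ R.posRoots)
    (hβ : β ∈ R.simples) (hsum : x + y = β) : False := by
  have key : ∀ α ∈ R.simples,
      (R.coeff x α : ℝ) + (R.coeff y α : ℝ) = if α = β then 1 else 0 := by
    intro α hα
    have h1 := R.coeff_simple hβ α hα
    have h2 : β = ∑ α ∈ R.simples, ((R.coeff x α : ℝ) + (R.coeff y α : ℝ)) • α := by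
      rw [← hsum]
      simp only [add_smul]
      rw [Finset.sum_add_distrib, ← R.coeff_spec' hx.1, ← R.coeff_spec' hy.1]
    have h3 := R.coeff_val (R.simples_sub hβ) h2 α hα
    rw [← h3, h1]
  have h1 : R.coeff x β + R.coeff y β = 1 := by
    have := key β hβ
    rw [if_pos rfl] at this
    exact_mod_cast this
  have hzero : ∀ α ∈ R.simples, α ≠ β → R.coeff x α = 0 ∧ R.coeff y α = 0 := by
    intro α hα hne
    have h2 := key α hα
    rw [if_neg hne] at h2
    have h3 : R.coeff x α + R.coeff y α = 0 := by exact_mod_cast h2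
    have h4 := hx.2 α hα
    have h5 := hy.2 α hα
    omega
  have h4 := hx.2 β hβ
  have h5 := hy.2 β hβ
  have hone : R.coeff x β = 0 ∨ R.coeff y β = 0 := by omega
  rcases hone with h0 | h0
  · refine R.nonzero x hx.1 ?_
    rw [R.coeff_spec x hx.1]
    refine Finset.sum_eq_zero fun α hα => ?_
    by_cases hne : α = β
    · rw [hne, h0, zero_smul]
    · rw [(hzero α hα hne).1, zero_smul]
  · refine R.nonzero y hy.1 ?_
    rw [R.coeff_spec y hy.1]
    refine Finset.sum_eq_zero fun α hα => ?_
    by_cases hne : α = β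
    · rw [hne, h0, zero_smul]
    · rw [(hzero α hα hne).2, zero_smul]

end RootSystemData

end RootFacts
section RootFacts2

variable {V : Type} [NormedAddCommGroup V] [InnerProductSpace ℝ V] [FiniteDimensional ℝ V]

namespace RootSystemData

variable (R : RootSystemData V)

open Classical

lemma add_root {x y : V} (hx : x ∈ R.roots) (hy : y ∈ R.roots)
    (hinner : ⟪x, y⟫_ℝ < 0) (hne : x + y ≠ 0) : x + y ∈ R.roots := by
  have hx0 : x ≠ 0 := R.nonzero x hx
  have hy0 : y ≠ 0 := R.nonzero y hy
  have hqx : 0 < ⟪x, x⟫_ℝ := real_inner_self_pos' hx0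
  have hqy : 0 < ⟪y, y⟫_ℝ := real_inner_self_pos' hy0
  obtain ⟨k₁, hk₁⟩ := R.crystal y hy x hx
  obtain ⟨k₂, hk₂⟩ := R.crystal x hx y hy
  rw [show ⟪y, x⟫_ℝ = ⟪x, y⟫_ℝ from real_inner_comm x y] at hk₂
  -- hk₁ : 2 * ⟪x, y⟫ / ⟪y, y⟫ = k₁ ; hk₂ : 2 * ⟪x, y⟫ / ⟪x, x⟫ = k₂
  have hk₁neg : (k₁ : ℝ) < 0 := by
    rw [← hk₁]; exact div_neg_of_neg_of_pos (by linarith) hqy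
  have hk₂neg : (k₂ : ℝ) < 0 := by
    rw [← hk₂]; exact div_neg_of_neg_of_pos (by linarith) hqx
  by_cases h1 : k₁ = -1
  · have h := R.reflClosed y hy x hx
    rw [hk₁, h1] at h
    have h3 : x - (((-1 : ℤ) : ℝ)) • y = x + y := by
      push_cast
      rw [neg_one_smul, sub_neg_eq_add]
    rwa [h3] at h
  by_cases h2 : k₂ = -1
  · have h := R.reflClosed x hx y hy
    rw [show ⟪y, x⟫_ℝ = ⟪x, y⟫_ℝ from real_inner_comm x y, hk₂, h2] at h
    have h3 : y - (((-1 : ℤ) : ℝ)) • x = x + y := by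
      push_cast
      rw [neg_one_smul, sub_neg_eq_add, add_comm]
    rwa [h3] at h
  -- both ≤ -2 : contradiction with Cauchy-Schwarz
  exfalso
  have hk₁le : (k₁ : ℝ) ≤ -2 := by
    have : k₁ ≤ -2 := by
      have : k₁ < 0 := by exact_mod_cast hk₁neg
      omega
    exact_mod_cast this
  have hk₂le : (k₂ : ℝ) ≤ -2 := by
    have : k₂ ≤ -2 := by
      have : k₂ < 0 := by exact_mod_cast hk₂neg
      omega
    exact_mod_cast this
  -- then ⟪x,y⟫ * ⟪x,y⟫ ≥ ⟪x,x⟫ * ⟪y,y⟫, so equality in Cauchy-Schwarz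
  have hxy1 : 2 * ⟪x, y⟫_ℝ = (k₁ : ℝ) * ⟪y, y⟫_ℝ := by
    field_simp at hk₁
    linarith [hk₁]
  have hxy2 : 2 * ⟪x, y⟫_ℝ = (k₂ : ℝ) * ⟪x, x⟫_ℝ := by
    field_simp at hk₂
    linarith [hk₂]
  have hk : (4 : ℝ) ≤ (k₁ : ℝ) * (k₂ : ℝ) := by nlinarith
  have e1 : (2 * ⟪x, y⟫_ℝ) * (2 * ⟪x, y⟫_ℝ) = ((k₁ : ℝ) * ⟪y, y⟫_ℝ) * ((k₂ : ℝ) * ⟪x, x⟫_ℝ) :=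
    congrArg₂ (· * ·) hxy1 hxy2
  have hge : ⟪x, x⟫_ℝ * ⟪y, y⟫_ℝ ≤ ⟪x, y⟫_ℝ * ⟪x, y⟫_ℝ := by
    nlinarith [e1, hk, mul_pos hqx hqy]
  have hle := real_inner_mul_inner_self_le x y
  have heq : ⟪x, y⟫_ℝ * ⟪x, y⟫_ℝ = ⟪x, x⟫_ℝ * ⟪y, y⟫_ℝ := le_antisymm hle hge
  -- equality case: x and y proportional
  have hnx : 0 < ‖x‖ := norm_pos_iff.mpr hx0
  have hny : 0 < ‖y‖ := norm_pos_iff.mpr hy0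
  have hxx : ⟪x, x⟫_ℝ = ‖x‖ * ‖x‖ := real_inner_self_eq_norm_mul_norm x
  have hyy : ⟪y, y⟫_ℝ = ‖y‖ * ‖y‖ := real_inner_self_eq_norm_mul_norm y
  have ha : (-⟪x, y⟫_ℝ - ‖x‖ * ‖y‖) * (-⟪x, y⟫_ℝ + ‖x‖ * ‖y‖) = 0 := by
    linear_combination heq + ⟪y, y⟫_ℝ * hxx + (‖x‖ * ‖x‖) * hyy
  have hinner2 : ⟪x, -y⟫_ℝ = ‖x‖ * ‖-y‖ := by
    rw [inner_neg_right, norm_neg]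
    rcases mul_eq_zero.mp ha with h | h
    · linarith
    · nlinarith [mul_pos hnx hny]
  have hprop := inner_eq_norm_mul_iff_real.mp hinner2
  -- ‖-y‖ • x = ‖x‖ • (-y)
  rw [norm_neg] at hprop
  have hyval : (-(‖x‖⁻¹ * ‖y‖)) • x = y := by
    have h5 : ‖x‖⁻¹ • (‖y‖ • x) = ‖x‖⁻¹ • (‖x‖ • (-y)) := by rw [hprop]
    rw [smul_smul, smul_smul, inv_mul_cancel₀ (ne_of_gt hnx), one_smul] at h5
    rw [neg_smul, h5, neg_neg]
  have hroot : (-(‖x‖⁻¹ * ‖y‖)) • x ∈ R.roots := by rw [hyval]; exact hy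
  rcases R.reduced x hx _ hroot with h | h
  · have hp : 0 < ‖x‖⁻¹ * ‖y‖ := by positivity
    linarith
  · apply hne
    rw [← hyval, h, neg_one_smul]
    abel

lemma inner_theta_simple_nonneg {θ α : V} (hθ : R.IsHighest θ) (hα : α ∈ R.simples) :
    0 ≤ ⟪α, θ⟫_ℝ := by
  by_contra hcon
  push_neg at hcon
  have hαr := R.simples_sub hα
  have hθr := hθ.1.1
  have hne : θ + α ≠ 0 := by
    intro h0
    have hθeq : θ = -α := by
      have := neg_eq_of_add_eq_zero_left h0
      rw [← this]
    have hc := R.coeff_val hθr (f := fun β => if β = α then (-1 : ℝ) else 0) ?_ α hα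
    · have hc' : (R.coeff θ α : ℝ) = -1 := by simpa using hc
      have h2 := hθ.1.2 α hα
      have h3 : (0 : ℝ) ≤ (R.coeff θ α : ℝ) := by exact_mod_cast h2
      rw [hc'] at h3
      linarith
    · rw [hθeq]
      simp [ite_smul, Finset.sum_ite_eq', hα]
  have hroot : θ + α ∈ R.roots :=
    R.add_root hθr hαr (by rw [real_inner_comm]; exact hcon) hne
  obtain ⟨c, hc⟩ := hθ.2 (θ + α) hroot
  have h2 : -α = ∑ β ∈ R.simples, (((c β : ℤ) : ℝ)) • β := by
    have h3 : θ - (θ + α) = -α := by abel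
    rw [← h3, hc, sum_zsmul_eq]
  have h4 := R.coords_unique (f := fun β => if β = α then (-1 : ℝ) else 0)
    (g := fun β => ((c β : ℤ) : ℝ)) ?_ α hα
  · have h4' : (-1 : ℝ) = ((c α : ℤ) : ℝ) := by simpa using h4
    have h5 : (0 : ℝ) ≤ ((c α : ℤ) : ℝ) := by positivity
    rw [← h4'] at h5
    linarith
  · have h6 : ∑ β ∈ R.simples, (if β = α then (-1 : ℝ) else 0) • β = -α := by
      simp [ite_smul, Finset.sum_ite_eq', hα]
    beta_reduce
    rw [h6]
    exact h2

lemma inner_theta_pos_nonneg {θ ν : V} (hθ : R.IsHighest θ) (hν : ν ∈ R.posRoots) :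
    0 ≤ ⟪ν, θ⟫_ℝ := by
  have heq : ⟪ν, θ⟫_ℝ = ∑ α ∈ R.simples, (R.coeff ν α : ℝ) * ⟪α, θ⟫_ℝ := by
    nth_rewrite 1 [R.coeff_spec' hν.1]
    rw [sum_inner]
    exact Finset.sum_congr rfl fun α _ => real_inner_smul_left _ _ _
  rw [heq]
  refine Finset.sum_nonneg fun α hα => mul_nonneg ?_ (R.inner_theta_simple_nonneg hθ hα)
  exact_mod_cast hν.2 α hα

lemma exists_other_coeff {γ α : V} (hγ : γ ∈ R.posRoots) (hα : α ∈ R.simples)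
    (hne : γ ≠ α) : ∃ β ∈ R.simples, β ≠ α ∧ 0 < R.coeff γ β := by
  by_contra hno
  push_neg at hno
  have hz : ∀ β ∈ R.simples, β ≠ α → R.coeff γ β = 0 := fun β hβ hne' =>
    le_antisymm (hno β hβ hne') (hγ.2 β hβ)
  have hγeq : γ = (R.coeff γ α : ℝ) • α := by
    nth_rewrite 1 [R.coeff_spec' hγ.1]
    rw [Finset.sum_eq_single α]
    · intro b hb hbne
      rw [hz b hb hbne]
      simp
    · intro habs
      exact absurd hα habs
  rcases R.reduced α (R.simples_sub hα) _ (hγeq ▸ hγ.1) with h1 | h1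
  · exact hne (by rw [hγeq, h1, one_smul])
  · have h2 : R.coeff γ α = -1 := by exact_mod_cast h1
    have h3 := hγ.2 α hα
    omega

lemma rsRefl_simple_pos {α ν : V} (hα : α ∈ R.simples) (hν : ν ∈ R.posRoots)
    (hne : ν ≠ α) : rsRefl α ν ∈ R.posRoots := by
  have hαr := R.simples_sub hα
  have hνr := hν.1
  have hroot : rsRefl α ν ∈ R.roots := R.reflClosed α hαr ν hνr
  obtain ⟨k, hk⟩ := R.crystal α hαr ν hνr
  obtain ⟨β, hβ, hβne, hβpos⟩ := R.exists_other_coeff hν hα hne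
  have hval : ∀ δ ∈ R.simples, (R.coeff (rsRefl α ν) δ : ℝ) =
      (R.coeff ν δ : ℝ) - (if δ = α then (k : ℝ) else 0) := by
    refine R.coeff_val hroot ?_
    rw [rsRefl_apply, hk]
    simp only [sub_smul]
    rw [Finset.sum_sub_distrib, ← R.coeff_spec' hνr]
    congr 1
    simp [ite_smul, Finset.sum_ite_eq', hα]
  have hcoeffβ : R.coeff (rsRefl α ν) β = R.coeff ν β := by
    have h := hval β hβ
    rw [if_neg hβne, sub_zero] at h
    exact_mod_cast h
  rcases R.coeff_sign _ hroot with h | h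
  · exact ⟨hroot, h⟩
  · exfalso
    have := h β hβ
    omega

lemma eq_simple_of_neg {α ν : V} (hα : α ∈ R.simples) (hν : ν ∈ R.posRoots)
    (hneg : R.IsNegRoot (rsRefl α ν)) : ν = α := by
  by_contra hne
  exact R.not_pos_neg (R.rsRefl_simple_pos hα hν hne) hneg

lemma wordMap_roots {l : List V} (hl : ∀ α ∈ l, α ∈ R.roots) {γ : V} (hγ : γ ∈ R.roots) :
    wordMap l γ ∈ R.roots := by
  induction l with
  | nil => exact hγ
  | cons a t ih =>
    exact R.reflClosed a (hl a List.mem_cons_self) (wordMap t γ)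
      (ih fun α hα => hl α (List.mem_cons_of_mem a hα))

lemma strong_exchange (l : List V) (hl : ∀ α ∈ l, α ∈ R.simples) {δ : V}
    (hδ : δ ∈ R.posRoots) (hneg : R.IsNegRoot (wordMap l δ)) :
    ∃ l' : List V, (∀ α ∈ l', α ∈ R.simples) ∧ l'.length + 1 = l.length ∧
      wordMap l' = wordMap l ∘ rsRefl δ := by
  induction l with
  | nil => exact absurd hneg (fun h => R.not_pos_neg hδ h)
  | cons a t ih =>
    have hat : a ∈ R.simples := hl a List.mem_cons_self
    have ht : ∀ α ∈ t, α ∈ R.simples := fun α hα => hl α (List.mem_cons_of_mem a hα)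
    have hν : wordMap t δ ∈ R.roots :=
      R.wordMap_roots (fun α hα => R.simples_sub (ht α hα)) hδ.1
    rcases R.pos_or_neg hν with hpos | hneg'
    · have heq : wordMap t δ = a := R.eq_simple_of_neg hat hpos hneg
      refine ⟨t, ht, rfl, ?_⟩
      funext x
      show wordMap t x = rsRefl a (wordMap t (rsRefl δ x))
      rw [wordMap_conj, heq, rsRefl_invol]
    · obtain ⟨t', ht', hlen, heqf⟩ := ih ht hneg'
      refine ⟨a :: t', ?_, ?_, ?_⟩
      · intro α hα
        rcases List.mem_cons.mp hα with h | h
        · rw [h]; exact hat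
        · exact ht' α h
      · simp only [List.length_cons]
        omega
      · funext x
        show rsRefl a (wordMap t' x) = rsRefl a (wordMap t (rsRefl δ x))
        rw [show wordMap t' x = wordMap t (rsRefl δ x) from congrFun heqf x]

lemma decompose {γ : V} (hγ : γ ∈ R.posRoots) (hns : γ ∉ R.simples) :
    ∃ α ∈ R.simples, γ - α ∈ R.posRoots := by
  have hγr := hγ.1
  have hγ0 : γ ≠ 0 := R.nonzero γ hγr
  have hex : ∃ α ∈ R.simples, 0 < ⟪γ, α⟫_ℝ := by
    by_contra hno
    push_neg at hno
    have hle : ⟪γ, γ⟫_ℝ ≤ 0 := by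
      have heq : ⟪γ, γ⟫_ℝ = ∑ α ∈ R.simples, (R.coeff γ α : ℝ) * ⟪α, γ⟫_ℝ := by
        nth_rewrite 1 [R.coeff_spec' hγr]
        rw [sum_inner]
        exact Finset.sum_congr rfl fun α _ => real_inner_smul_left _ _ _
      rw [heq]
      refine Finset.sum_nonpos fun α hα => mul_nonpos_of_nonneg_of_nonpos ?_ ?_
      · exact_mod_cast hγ.2 α hα
      · rw [real_inner_comm]; exact hno α hα
    have := real_inner_self_pos' hγ0
    linarith
  obtain ⟨α, hα, hinner⟩ := hex
  have hαr := R.simples_sub hα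
  have hne : γ ≠ α := fun h => hns (h ▸ hα)
  have hroot : γ - α ∈ R.roots := by
    have h := R.add_root hγr (R.neg_mem hαr)
      (by rw [inner_neg_right]; linarith) (by rw [← sub_eq_add_neg]; exact sub_ne_zero.mpr hne)
    rwa [← sub_eq_add_neg] at h
  obtain ⟨β, hβ, hβne, hβpos⟩ := R.exists_other_coeff hγ hα hne
  have hval : ∀ δ ∈ R.simples, (R.coeff (γ - α) δ : ℝ) =
      (R.coeff γ δ : ℝ) - (if δ = α then 1 else 0) := by
    refine R.coeff_val hroot ?_
    simp only [sub_smul]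
    rw [Finset.sum_sub_distrib, ← R.coeff_spec' hγr]
    congr 1
    simp [ite_smul, Finset.sum_ite_eq', hα]
  have hcβ : R.coeff (γ - α) β = R.coeff γ β := by
    have h := hval β hβ
    rw [if_neg hβne, sub_zero] at h
    exact_mod_cast h
  rcases R.coeff_sign _ hroot with h | h
  · exact ⟨α, hα, hroot, h⟩
  · exfalso
    have := h β hβ
    omega

end RootSystemData

end RootFacts2

/-- Lemma 2.1: if `μ` is a long positive root, `w ∈ W` takes `θ` to `μ`
and has minimal length among such elements, `β ∈ Π` and `(β, μ) = 0`, then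
`w⁻¹(β) ∈ Π` and `(w⁻¹(β), θ) = 0`. -/
theorem stmt0 {V : Type} [NormedAddCommGroup V] [InnerProductSpace ℝ V] [FiniteDimensional ℝ V]
    (R : RootSystemData V) (θ μ : V) (hθ : R.IsHighest θ)
    (hμpos : μ ∈ R.posRoots) (hμlong : R.IsLong μ)
    (l : List V) (hl : ∀ α ∈ l, α ∈ R.simples) (hw : wordMap l θ = μ)
    (hmin : ∀ l' : List V, (∀ α ∈ l', α ∈ R.simples) → wordMap l' θ = μ →
      l.length ≤ l'.length)
    (β : V) (hβ : β ∈ R.simples) (hβμ : ⟪β, μ⟫_ℝ = 0) :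
    wordMap l.reverse β ∈ R.simples ∧ ⟪wordMap l.reverse β, θ⟫_ℝ = 0 := by
  have hβr : β ∈ R.roots := R.simples_sub hβ
  have hrl : ∀ α ∈ l.reverse, α ∈ R.simples := fun α hα => hl α (List.mem_reverse.mp hα)
  have hlr : ∀ α ∈ l, α ∈ R.roots := fun α hα => R.simples_sub (hl α hα)
  have hγr : wordMap l.reverse β ∈ R.roots :=
    R.wordMap_roots (fun α hα => R.simples_sub (hrl α hα)) hβr
  have hwγ : wordMap l (wordMap l.reverse β) = β := wordMap_apply_reverse l β
  have hγθ : ⟪wordMap l.reverse β, θ⟫_ℝ = 0 := by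
    have h1 : wordMap l.reverse (wordMap l θ) = θ := wordMap_reverse_apply l θ
    have h2 := wordMap_inner l.reverse β (wordMap l θ)
    rw [h1, hw] at h2
    exact h2.trans hβμ
  -- positivity of w⁻¹ β
  have hγpos : wordMap l.reverse β ∈ R.posRoots := by
    rcases R.pos_or_neg hγr with h | h
    · exact h
    · exfalso
      have hnγ : -(wordMap l.reverse β) ∈ R.posRoots := R.neg_negRoot h
      have hwneg : wordMap l (-(wordMap l.reverse β)) = -β := by rw [wordMap_neg, hwγ]
      have hnegβ : R.IsNegRoot (wordMap l (-(wordMap l.reverse β))) := by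
        rw [hwneg]; exact R.neg_posRoot (R.simple_pos hβ)
      obtain ⟨l', hl', hlen, heq⟩ := R.strong_exchange l hl hnγ hnegβ
      have hθ' : wordMap l' θ = μ := by
        rw [congrFun heq θ]
        show wordMap l (rsRefl (-(wordMap l.reverse β)) θ) = μ
        rw [rsRefl_neg_base,
          rsRefl_of_inner_zero _ θ (by rw [real_inner_comm]; exact hγθ), hw]
      have := hmin l' hl' hθ'
      omega
  refine ⟨?_, hγθ⟩
  by_contra hns
  obtain ⟨α, hα, hδpos⟩ := R.decompose hγpos hns
  have hαpos := R.simple_pos hα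
  have hγsum : (wordMap l.reverse β - α) + α = wordMap l.reverse β := by abel
  have h0 : ⟪wordMap l.reverse β - α, θ⟫_ℝ + ⟪α, θ⟫_ℝ = 0 := by
    rw [← inner_add_left, hγsum]
    exact hγθ
  have h1 := R.inner_theta_pos_nonneg hθ hδpos
  have h2 := R.inner_theta_pos_nonneg hθ hαpos
  have hδθ : ⟪wordMap l.reverse β - α, θ⟫_ℝ = 0 := by linarith
  have hαθ : ⟪α, θ⟫_ℝ = 0 := by linarith
  have hwδ : wordMap l (wordMap l.reverse β - α) ∈ R.roots := R.wordMap_roots hlr hδpos.1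
  have hwα : wordMap l α ∈ R.roots := R.wordMap_roots hlr hαpos.1
  have hsum : wordMap l (wordMap l.reverse β - α) + wordMap l α = β := by
    rw [← wordMap_add, hγsum, hwγ]
  rcases R.pos_or_neg hwδ with hpδ | hnδ
  · rcases R.pos_or_neg hwα with hpα | hnα
    · exact R.pos_add_pos_ne_simple hpδ hpα hβ hsum
    · obtain ⟨l', hl', hlen, heq⟩ := R.strong_exchange l hl hαpos hnα
      have hθ' : wordMap l' θ = μ := by
        rw [congrFun heq θ]
        show wordMap l (rsRefl α θ) = μ
        rw [rsRefl_of_inner_zero _ θ (by rw [real_inner_comm]; exact hαθ), hw]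
      have := hmin l' hl' hθ'
      omega
  · obtain ⟨l', hl', hlen, heq⟩ := R.strong_exchange l hl hδpos hnδ
    have hθ' : wordMap l' θ = μ := by
      rw [congrFun heq θ]
      show wordMap l (rsRefl (wordMap l.reverse β - α) θ) = μ
      rw [rsRefl_of_inner_zero _ θ (by rw [real_inner_comm]; exact hδθ), hw]
    have := hmin l' hl' hθ'
    omega
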